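/- Let u : ℝ^d → ℝ be a W^{1,2} function with respect to the Gaussian measure ρ = (4π)^{-d/2} e^{-|y|²/4} dy. Then ∫_{ℝ^d} u² |y|² ρ dy ≤ 4 ∫_{ℝ^d} (d u² + 4|∇u|²) ρ dy. -/

import Mathlib

open MeasureTheory Real Filter

lemma insertNth_affine {n : ℕ} (i : Fin (n+1)) (w : Fin n → ℝ) (t : ℝ) :
    i.insertNth (α := fun _ => ℝ) t w = t • (Pi.single i 1 : Fin (n+1) → ℝ) + i.insertNth 0 w := by
  funext j
  refine Fin.succAboveCases i ?_ (fun k => ?_) j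
  · simp
  · simp [Pi.single_eq_of_ne (Fin.succAbove_ne i k)]

lemma hasDerivAt_insertNth {n : ℕ} (i : Fin (n+1)) (w : Fin n → ℝ) (t : ℝ) :
    HasDerivAt (fun s : ℝ => i.insertNth (α := fun _ => ℝ) s w) (Pi.single i 1 : Fin (n+1) → ℝ) t := by
  have h : (fun s : ℝ => i.insertNth (α := fun _ => ℝ) s w)
      = fun s : ℝ => s • (Pi.single i 1 : Fin (n+1) → ℝ) + i.insertNth 0 w :=
    funext fun s => insertNth_affine i w s
  rw [h]
  simpa using ((hasDerivAt_id t).smul_const (Pi.single i 1 : Fin (n+1) → ℝ)).add_const (i.insertNth (α := fun _ => ℝ) 0 w)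

lemma sum_sq_insertNth {n : ℕ} (i : Fin (n+1)) (w : Fin n → ℝ) (t : ℝ) :
    ∑ j, (i.insertNth (α := fun _ => ℝ) t w j) ^ 2 = t ^ 2 + ∑ k, (w k) ^ 2 := by
  have h := Fin.sum_univ_succAbove (M := ℝ) (fun j => (i.insertNth (α := fun _ => ℝ) t w j) ^ 2) i
  simpa using h

lemma hasDerivAt_slice {n : ℕ} (v : (Fin (n+1) → ℝ) → ℝ) (hv : Differentiable ℝ v)
    (c : ℝ) (i : Fin (n+1)) (w : Fin n → ℝ) (t : ℝ) :
    HasDerivAt (fun s : ℝ => v (i.insertNth (α := fun _ => ℝ) s w) ^ 2 * (i.insertNth (α := fun _ => ℝ) s w i) *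
        (c * Real.exp (-(∑ j, (i.insertNth (α := fun _ => ℝ) s w j) ^ 2) / 4)))
      ((2 * v (i.insertNth (α := fun _ => ℝ) t w) * (fderiv ℝ v (i.insertNth (α := fun _ => ℝ) t w) (Pi.single i 1))
          * (i.insertNth (α := fun _ => ℝ) t w i)
        + v (i.insertNth (α := fun _ => ℝ) t w) ^ 2
        - v (i.insertNth (α := fun _ => ℝ) t w) ^ 2 * (i.insertNth (α := fun _ => ℝ) t w i) ^ 2 / 2) *
        (c * Real.exp (-(∑ j, (i.insertNth (α := fun _ => ℝ) t w j) ^ 2) / 4))) t := by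
  set C := ∑ k, (w k) ^ 2 with hC
  have hfun : (fun s : ℝ => v (i.insertNth (α := fun _ => ℝ) s w) ^ 2 * (i.insertNth (α := fun _ => ℝ) s w i) *
        (c * Real.exp (-(∑ j, (i.insertNth (α := fun _ => ℝ) s w j) ^ 2) / 4)))
      = fun s : ℝ => v (i.insertNth (α := fun _ => ℝ) s w) ^ 2 * s * (c * Real.exp (-(s ^ 2 + C) / 4)) := by
    funext s
    rw [sum_sq_insertNth, Fin.insertNth_apply_same]
  rw [hfun]
  have hψ := hasDerivAt_insertNth i w t
  have h1 : HasDerivAt (fun s : ℝ => v (i.insertNth (α := fun _ => ℝ) s w))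
      (fderiv ℝ v (i.insertNth (α := fun _ => ℝ) t w) (Pi.single i 1)) t :=
    (hv (i.insertNth (α := fun _ => ℝ) t w)).hasFDerivAt.comp_hasDerivAt t hψ
  have h2 := h1.pow 2
  have h3 : HasDerivAt (fun s : ℝ => -(s ^ 2 + C) / 4) (-(2 * t) / 4) t := by
    simpa using (((hasDerivAt_pow 2 t).add_const C).neg.div_const 4)
  have h4 : HasDerivAt (fun s : ℝ => c * Real.exp (-(s ^ 2 + C) / 4))
      (c * (Real.exp (-(t ^ 2 + C) / 4) * (-(2 * t) / 4))) t :=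
    (h3.exp).const_mul c
  have h5 := (h2.mul (hasDerivAt_id t)).mul h4
  refine h5.congr_deriv ?_
  rw [sum_sq_insertNth, Fin.insertNth_apply_same]
  simp only [id_eq, pow_one, Pi.pow_apply, Pi.mul_apply, ← hC]
  ring

lemma integral_slice_deriv_eq_zero {n : ℕ} (i : Fin (n+1))
    (F F' : (Fin (n+1) → ℝ) → ℝ)
    (hF : Integrable F) (hF' : Integrable F')
    (hd : ∀ (w : Fin n → ℝ) (t : ℝ),
      HasDerivAt (fun s => F (i.insertNth (α := fun _ => ℝ) s w))
        (F' (i.insertNth (α := fun _ => ℝ) t w)) t) :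
    ∫ x, F' x = 0 := by
  have mp := (MeasureTheory.volume_preserving_piFinSuccAbove (fun _ : Fin (n+1) => ℝ) i).symm
  set e := MeasurableEquiv.piFinSuccAbove (fun _ : Fin (n+1) => ℝ) i with he
  have hsymm : ∀ p : ℝ × (Fin n → ℝ), e.symm p = i.insertNth (α := fun _ => ℝ) p.1 p.2 := by
    intro p; rfl
  have hG' : Integrable (fun p : ℝ × (Fin n → ℝ) => F' (e.symm p)) :=
    (mp.integrable_comp_emb e.symm.measurableEmbedding).mpr hF'
  have hG : Integrable (fun p : ℝ × (Fin n → ℝ) => F (e.symm p)) :=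
    (mp.integrable_comp_emb e.symm.measurableEmbedding).mpr hF
  have h1 : ∫ x, F' x = ∫ p : ℝ × (Fin n → ℝ), F' (e.symm p) :=
    (mp.integral_comp' F').symm
  rw [h1]
  rw [MeasureTheory.Measure.volume_eq_prod] at hG' hG ⊢
  rw [MeasureTheory.integral_prod_symm _ hG']
  have hae : ∀ᵐ w : Fin n → ℝ, (∫ t : ℝ, F' (e.symm (t, w))) = 0 := by
    filter_upwards [hG.prod_left_ae, hG'.prod_left_ae] with w h1 h2
    have := MeasureTheory.integral_eq_zero_of_hasDerivAt_of_integrable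
      (f := fun t => F (e.symm (t, w))) (f' := fun t => F' (e.symm (t, w)))
      (fun t => by simpa only [hsymm] using hd w t) h2 h1
    exact this
  calc ∫ w : Fin n → ℝ, ∫ t : ℝ, F' (e.symm (t, w))
      = ∫ w : Fin n → ℝ, (0:ℝ) := integral_congr_ae hae
    _ = 0 := by simp

lemma int_lin2 {X : Type*} [MeasureSpace X] {f g : X → ℝ}
    (hf : Integrable f) (hg : Integrable g) (a b : ℝ) :
    ∫ x, (a * f x + b * g x) = a * (∫ x, f x) + b * (∫ x, g x) := by
  have h1 : Integrable (fun x => a * f x) := hf.const_mul a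
  have h2 : Integrable (fun x => b * g x) := hg.const_mul b
  rw [integral_add h1 h2, integral_const_mul, integral_const_mul]

lemma int_lin3 {X : Type*} [MeasureSpace X] {f g h : X → ℝ}
    (hf : Integrable f) (hg : Integrable g) (hh : Integrable h) (a b c : ℝ) :
    ∫ x, (a * f x + b * g x + c * h x)
      = a * (∫ x, f x) + b * (∫ x, g x) + c * (∫ x, h x) := by
  have h1 : Integrable (fun x => a * f x) := hf.const_mul a
  have h2 : Integrable (fun x => b * g x) := hg.const_mul b
  have h3 : Integrable (fun x => c * h x) := hh.const_mul c
  have h12 : Integrable (fun x => a * f x + b * g x) := h1.add h2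
  rw [integral_add h12 h3, integral_add h1 h2, integral_const_mul, integral_const_mul,
    integral_const_mul]

lemma pi_key {n : ℕ} (v N : (Fin (n+1) → ℝ) → ℝ) (hv : Differentiable ℝ v) {c : ℝ} (hc : 0 < c)
    (hN1 : ∀ x i, |fderiv ℝ v x (Pi.single i 1)| ≤ N x)
    (hN2 : ∀ x, |fderiv ℝ v x x| ≤ N x * Real.sqrt (∑ j, x j ^ 2))
    (hA : Integrable (fun x : Fin (n+1) → ℝ => v x ^ 2 * (c * Real.exp (-(∑ j, x j ^ 2) / 4))))
    (hB : Integrable (fun x : Fin (n+1) → ℝ => N x ^ 2 * (c * Real.exp (-(∑ j, x j ^ 2) / 4))))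
    (hI : Integrable (fun x : Fin (n+1) → ℝ =>
      v x ^ 2 * (∑ j, x j ^ 2) * (c * Real.exp (-(∑ j, x j ^ 2) / 4)))) :
    (∫ x : Fin (n+1) → ℝ, v x ^ 2 * (∑ j, x j ^ 2) * (c * Real.exp (-(∑ j, x j ^ 2) / 4))) ≤
      4 * ((n+1 : ℝ) * ∫ x : Fin (n+1) → ℝ, v x ^ 2 * (c * Real.exp (-(∑ j, x j ^ 2) / 4)))
        + 16 * ∫ x : Fin (n+1) → ℝ, N x ^ 2 * (c * Real.exp (-(∑ j, x j ^ 2) / 4)) := by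
  have hS : Continuous fun x : Fin (n+1) → ℝ => ∑ j, x j ^ 2 :=
    continuous_finset_sum _ fun j _ => (continuous_apply j).pow 2
  have hWc : Continuous fun x : Fin (n+1) → ℝ => c * Real.exp (-(∑ j, x j ^ 2) / 4) :=
    continuous_const.mul (Real.continuous_exp.comp (hS.neg.div_const 4))
  have hW0 : ∀ x : Fin (n+1) → ℝ, 0 ≤ c * Real.exp (-(∑ j, x j ^ 2) / 4) :=
    fun x => mul_nonneg hc.le (Real.exp_pos _).le
  have hvc : Continuous v := hv.continuous
  have hDim : ∀ i : Fin (n+1), Measurable fun x => fderiv ℝ v x (Pi.single i 1) :=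
    fun i => measurable_fderiv_apply_const ℝ v _
  have hDxm : Measurable fun x : Fin (n+1) → ℝ => fderiv ℝ v x x :=
    isBoundedBilinearMap_apply.continuous.measurable.comp
      ((measurable_fderiv ℝ v).prodMk measurable_id)
  have hSnn : ∀ x : Fin (n+1) → ℝ, 0 ≤ ∑ j, x j ^ 2 :=
    fun x => Finset.sum_nonneg fun j _ => sq_nonneg _
  have hxi2 : ∀ (x : Fin (n+1) → ℝ) i, x i ^ 2 ≤ ∑ j, x j ^ 2 :=
    fun x i => Finset.single_le_sum (fun j _ => sq_nonneg (x j)) (Finset.mem_univ i)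
  have hNnn : ∀ x, 0 ≤ N x := fun x => le_trans (abs_nonneg _) (hN1 x 0)
  -- pointwise bound on the cross term
  have hcross : ∀ x, |2 * v x * fderiv ℝ v x x|
      ≤ v x ^ 2 * (∑ j, x j ^ 2) / 4 + 4 * N x ^ 2 := by
    intro x
    have h2 := hN2 x
    have hs : Real.sqrt (∑ j, x j ^ 2) ^ 2 = ∑ j, x j ^ 2 := Real.sq_sqrt (hSnn x)
    have habs : |2 * v x * fderiv ℝ v x x| ≤ 2 * |v x| * (N x * Real.sqrt (∑ j, x j ^ 2)) := by
      rw [abs_mul, abs_mul, abs_two]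
      have := abs_nonneg (v x)
      gcongr
    nlinarith [sq_nonneg (|v x| * Real.sqrt (∑ j, x j ^ 2) / 2 - 2 * N x), sq_abs (v x)]
  -- integrability of the cross term
  have hXint : Integrable (fun x : Fin (n+1) → ℝ =>
      2 * v x * fderiv ℝ v x x * (c * Real.exp (-(∑ j, x j ^ 2) / 4))) := by
    refine Integrable.mono' ((hI.div_const 4).add (hB.const_mul 4)) ?_ ?_
    · exact (((hvc.measurable.const_mul 2).mul hDxm).mul hWc.measurable).aestronglyMeasurable
    · refine Filter.Eventually.of_forall fun x => ?_
      rw [Real.norm_eq_abs, abs_mul, abs_of_nonneg (hW0 x)]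
      calc |2 * v x * fderiv ℝ v x x| * (c * Real.exp (-(∑ j, x j ^ 2) / 4))
          ≤ (v x ^ 2 * (∑ j, x j ^ 2) / 4 + 4 * N x ^ 2)
            * (c * Real.exp (-(∑ j, x j ^ 2) / 4)) := by
            exact mul_le_mul_of_nonneg_right (hcross x) (hW0 x)
        _ = v x ^ 2 * (∑ j, x j ^ 2) * (c * Real.exp (-(∑ j, x j ^ 2) / 4)) / 4
            + 4 * (N x ^ 2 * (c * Real.exp (-(∑ j, x j ^ 2) / 4))) := by ring
  -- integrability of F i and F' i
  have hFint : ∀ i : Fin (n+1), Integrable (fun x : Fin (n+1) → ℝ =>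
      v x ^ 2 * x i * (c * Real.exp (-(∑ j, x j ^ 2) / 4))) := by
    intro i
    refine Integrable.mono' ((hA.add hI).div_const 2) ?_ ?_
    · exact (((hvc.pow 2).mul (continuous_apply i)).mul hWc).measurable.aestronglyMeasurable
    · refine Filter.Eventually.of_forall fun x => ?_
      rw [Real.norm_eq_abs, abs_mul, abs_mul, abs_of_nonneg (hW0 x), abs_of_nonneg (sq_nonneg (v x))]
      have h1 : |x i| ≤ (1 + (∑ j, x j ^ 2)) / 2 := by
        nlinarith [sq_nonneg (|x i| - 1), sq_abs (x i), hxi2 x i]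
      calc v x ^ 2 * |x i| * (c * Real.exp (-(∑ j, x j ^ 2) / 4))
          ≤ v x ^ 2 * ((1 + (∑ j, x j ^ 2)) / 2) * (c * Real.exp (-(∑ j, x j ^ 2) / 4)) := by
            exact mul_le_mul_of_nonneg_right
              (mul_le_mul_of_nonneg_left h1 (sq_nonneg _)) (hW0 x)
        _ = (v x ^ 2 * (c * Real.exp (-(∑ j, x j ^ 2) / 4))
            + v x ^ 2 * (∑ j, x j ^ 2) * (c * Real.exp (-(∑ j, x j ^ 2) / 4))) / 2 := by ring
  have hF'int : ∀ i : Fin (n+1), Integrable (fun x : Fin (n+1) → ℝ =>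
      (2 * v x * fderiv ℝ v x (Pi.single i 1) * x i + v x ^ 2 - v x ^ 2 * x i ^ 2 / 2)
        * (c * Real.exp (-(∑ j, x j ^ 2) / 4))) := by
    intro i
    refine Integrable.mono' ((hI.add (hB.const_mul 2)).add hA) ?_ ?_
    · refine Measurable.aestronglyMeasurable ?_
      refine Measurable.mul ?_ hWc.measurable
      refine Measurable.sub (Measurable.add ?_ ((hvc.pow 2).measurable)) ?_
      · exact ((hvc.measurable.const_mul 2).mul (hDim i)).mul (measurable_pi_apply i)
      · exact ((hvc.pow 2).measurable.mul ((measurable_pi_apply i).pow_const 2)).div_const 2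
    · refine Filter.Eventually.of_forall fun x => ?_
      rw [Real.norm_eq_abs, abs_mul, abs_of_nonneg (hW0 x)]
      have hb : |2 * v x * fderiv ℝ v x (Pi.single i 1) * x i + v x ^ 2 - v x ^ 2 * x i ^ 2 / 2|
          ≤ v x ^ 2 * (∑ j, x j ^ 2) + 2 * N x ^ 2 + v x ^ 2 := by
        have h1 : |2 * v x * fderiv ℝ v x (Pi.single i 1) * x i|
            ≤ v x ^ 2 * x i ^ 2 / 2 + 2 * N x ^ 2 := by
          have hD := hN1 x i
          have habs : |2 * v x * fderiv ℝ v x (Pi.single i 1) * x i|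
              = 2 * (|v x| * |x i|) * |fderiv ℝ v x (Pi.single i 1)| := by
            rw [abs_mul, abs_mul, abs_mul, abs_two]; ring
          rw [habs]
          nlinarith [sq_nonneg (|v x| * |x i| - 2 * N x), sq_abs (v x), sq_abs (x i),
            mul_nonneg (abs_nonneg (v x)) (abs_nonneg (x i)), abs_nonneg (fderiv ℝ v x (Pi.single i 1)),
            mul_le_mul_of_nonneg_left hD (mul_nonneg (abs_nonneg (v x)) (abs_nonneg (x i)))]
        have h2 : v x ^ 2 * x i ^ 2 / 2 ≤ v x ^ 2 * (∑ j, x j ^ 2) / 2 := by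
          have := hxi2 x i
          nlinarith [sq_nonneg (v x)]
        calc |2 * v x * fderiv ℝ v x (Pi.single i 1) * x i + v x ^ 2 - v x ^ 2 * x i ^ 2 / 2|
            ≤ |2 * v x * fderiv ℝ v x (Pi.single i 1) * x i| + v x ^ 2 + v x ^ 2 * x i ^ 2 / 2 := by
              have h7 := abs_add_three (2 * v x * fderiv ℝ v x (Pi.single i 1) * x i) (v x ^ 2)
                (-(v x ^ 2 * x i ^ 2 / 2))
              rw [abs_neg] at h7
              have h5 : |v x ^ 2| = v x ^ 2 := abs_of_nonneg (sq_nonneg _)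
              have h6 : |v x ^ 2 * x i ^ 2 / 2| = v x ^ 2 * x i ^ 2 / 2 := by
                rw [abs_div, abs_mul, abs_of_nonneg (sq_nonneg (v x)), abs_of_nonneg (sq_nonneg (x i))]
                norm_num
              have h8 : 2 * v x * fderiv ℝ v x (Pi.single i 1) * x i + v x ^ 2 - v x ^ 2 * x i ^ 2 / 2
                  = 2 * v x * fderiv ℝ v x (Pi.single i 1) * x i + v x ^ 2 + -(v x ^ 2 * x i ^ 2 / 2) := by
                ring
              rw [h8]
              rw [h5, h6] at h7
              linarith
          _ ≤ v x ^ 2 * (∑ j, x j ^ 2) + 2 * N x ^ 2 + v x ^ 2 := by linarith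
      calc |2 * v x * fderiv ℝ v x (Pi.single i 1) * x i + v x ^ 2 - v x ^ 2 * x i ^ 2 / 2|
            * (c * Real.exp (-(∑ j, x j ^ 2) / 4))
          ≤ (v x ^ 2 * (∑ j, x j ^ 2) + 2 * N x ^ 2 + v x ^ 2)
            * (c * Real.exp (-(∑ j, x j ^ 2) / 4)) := mul_le_mul_of_nonneg_right hb (hW0 x)
        _ = (v x ^ 2 * (∑ j, x j ^ 2) * (c * Real.exp (-(∑ j, x j ^ 2) / 4))
              + 2 * (N x ^ 2 * (c * Real.exp (-(∑ j, x j ^ 2) / 4))))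
            + v x ^ 2 * (c * Real.exp (-(∑ j, x j ^ 2) / 4)) := by ring
  -- each divergence piece integrates to zero
  have hzero : ∀ i : Fin (n+1), (∫ x : Fin (n+1) → ℝ,
      (2 * v x * fderiv ℝ v x (Pi.single i 1) * x i + v x ^ 2 - v x ^ 2 * x i ^ 2 / 2)
        * (c * Real.exp (-(∑ j, x j ^ 2) / 4))) = 0 := by
    intro i
    exact integral_slice_deriv_eq_zero i _ _ (hFint i) (hF'int i)
      (fun w t => hasDerivAt_slice v hv c i w t)
  -- sum of the divergence pieces
  have hx : ∀ x : Fin (n+1) → ℝ, fderiv ℝ v x x = ∑ i, x i * fderiv ℝ v x (Pi.single i 1) := by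
    intro x
    calc fderiv ℝ v x x = fderiv ℝ v x (∑ i, Pi.single i (x i)) := by
          rw [Finset.univ_sum_single]
      _ = ∑ i, fderiv ℝ v x (Pi.single i (x i)) := by rw [map_sum]
      _ = ∑ i, x i * fderiv ℝ v x (Pi.single i 1) := by
          refine Finset.sum_congr rfl fun i _ => ?_
          have : Pi.single i (x i) = x i • (Pi.single i 1 : Fin (n+1) → ℝ) := by
            rw [← Pi.single_smul, smul_eq_mul, mul_one]
          rw [this, _root_.map_smul, smul_eq_mul]
  have hsum_eq : ∀ x : Fin (n+1) → ℝ,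
      (∑ i, (2 * v x * fderiv ℝ v x (Pi.single i 1) * x i + v x ^ 2 - v x ^ 2 * x i ^ 2 / 2)
        * (c * Real.exp (-(∑ j, x j ^ 2) / 4)))
      = (2 * v x * fderiv ℝ v x x + (n+1 : ℝ) * v x ^ 2 - v x ^ 2 * (∑ j, x j ^ 2) / 2)
        * (c * Real.exp (-(∑ j, x j ^ 2) / 4)) := by
    intro x
    rw [← Finset.sum_mul]
    congr 1
    have e1 : ∑ i, (2 * v x * fderiv ℝ v x (Pi.single i 1) * x i + v x ^ 2 - v x ^ 2 * x i ^ 2 / 2)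
        = (∑ i, 2 * v x * fderiv ℝ v x (Pi.single i 1) * x i) + (∑ i : Fin (n+1), v x ^ 2)
          - ∑ i, v x ^ 2 * x i ^ 2 / 2 := by
      rw [Finset.sum_sub_distrib, Finset.sum_add_distrib]
    rw [e1]
    have e2 : ∑ i, 2 * v x * fderiv ℝ v x (Pi.single i 1) * x i = 2 * v x * fderiv ℝ v x x := by
      rw [hx x, Finset.mul_sum]
      exact Finset.sum_congr rfl fun i _ => by ring
    have e3 : (∑ _i : Fin (n+1), v x ^ 2) = (n+1 : ℝ) * v x ^ 2 := by
      rw [Finset.sum_const, Finset.card_univ, Fintype.card_fin, nsmul_eq_mul]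
      push_cast
      ring
    have e4 : ∑ i, v x ^ 2 * x i ^ 2 / 2 = v x ^ 2 * (∑ j, x j ^ 2) / 2 := by
      rw [Finset.mul_sum, Finset.sum_div]
    rw [e2, e3, e4]
  -- the divergence identity
  have hZ : (∫ x : Fin (n+1) → ℝ,
      (2 * v x * fderiv ℝ v x x + (n+1 : ℝ) * v x ^ 2 - v x ^ 2 * (∑ j, x j ^ 2) / 2)
        * (c * Real.exp (-(∑ j, x j ^ 2) / 4))) = 0 := by
    have h1 : (∫ x : Fin (n+1) → ℝ,
        ∑ i, (2 * v x * fderiv ℝ v x (Pi.single i 1) * x i + v x ^ 2 - v x ^ 2 * x i ^ 2 / 2)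
          * (c * Real.exp (-(∑ j, x j ^ 2) / 4))) = 0 := by
      rw [integral_finset_sum _ (fun i _ => hF'int i)]
      simp [hzero]
    rw [← h1]
    exact integral_congr_ae (Filter.Eventually.of_forall fun x => (hsum_eq x).symm)
  -- split the identity integral and conclude
  have hZ' : (∫ x : Fin (n+1) → ℝ,
      (1 * (2 * v x * fderiv ℝ v x x * (c * Real.exp (-(∑ j, x j ^ 2) / 4)))
        + ((n : ℝ)+1) * (v x ^ 2 * (c * Real.exp (-(∑ j, x j ^ 2) / 4)))
        + (-(1/2)) * (v x ^ 2 * (∑ j, x j ^ 2) * (c * Real.exp (-(∑ j, x j ^ 2) / 4))))) = 0 := by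
    rw [← hZ]
    exact integral_congr_ae (Filter.Eventually.of_forall fun x => by ring)
  rw [int_lin3 hXint hA hI] at hZ'
  have hcomp : (∫ x : Fin (n+1) → ℝ,
          2 * v x * fderiv ℝ v x x * (c * Real.exp (-(∑ j, x j ^ 2) / 4)))
      ≤ ∫ x : Fin (n+1) → ℝ,
        ((1/4) * (v x ^ 2 * (∑ j, x j ^ 2) * (c * Real.exp (-(∑ j, x j ^ 2) / 4)))
          + 4 * (N x ^ 2 * (c * Real.exp (-(∑ j, x j ^ 2) / 4)))) := by
    have hcombo : Integrable (fun x : Fin (n+1) → ℝ =>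
        (1/4) * (v x ^ 2 * (∑ j, x j ^ 2) * (c * Real.exp (-(∑ j, x j ^ 2) / 4)))
          + 4 * (N x ^ 2 * (c * Real.exp (-(∑ j, x j ^ 2) / 4)))) :=
      (hI.const_mul _).add (hB.const_mul _)
    refine integral_mono hXint hcombo fun x => ?_
    have h1 := hcross x
    have h2 := le_abs_self (2 * v x * fderiv ℝ v x x)
    have h3 := hW0 x
    have h4 : 2 * v x * fderiv ℝ v x x * (c * Real.exp (-(∑ j, x j ^ 2) / 4))
        ≤ (v x ^ 2 * (∑ j, x j ^ 2) / 4 + 4 * N x ^ 2) * (c * Real.exp (-(∑ j, x j ^ 2) / 4)) := by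
      refine mul_le_mul_of_nonneg_right ?_ h3
      linarith
    calc 2 * v x * fderiv ℝ v x x * (c * Real.exp (-(∑ j, x j ^ 2) / 4))
        ≤ (v x ^ 2 * (∑ j, x j ^ 2) / 4 + 4 * N x ^ 2)
            * (c * Real.exp (-(∑ j, x j ^ 2) / 4)) := h4
      _ = (1/4) * (v x ^ 2 * (∑ j, x j ^ 2) * (c * Real.exp (-(∑ j, x j ^ 2) / 4)))
          + 4 * (N x ^ 2 * (c * Real.exp (-(∑ j, x j ^ 2) / 4))) := by ring
  rw [int_lin2 hI hB] at hcomp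
  linarith

/-- Gaussian Poincaré-type inequality exchanging the weight `|y|²` for one derivative:
for `u ∈ W^{1,2}` with respect to the Gaussian `ρ = (4π)^{-d/2} e^{-|y|²/4}`,
`∫ u² |y|² ρ ≤ 4 ∫ (d u² + 4 |∇u|²) ρ`. -/
theorem stmt_5 (d : ℕ) (u : EuclideanSpace ℝ (Fin d) → ℝ)
    (hu : Differentiable ℝ u)
    (hu2 : Integrable (fun y : EuclideanSpace ℝ (Fin d) =>
      u y ^ 2 * (((4 * π) ^ ((d : ℝ) / 2))⁻¹ * Real.exp (-‖y‖ ^ 2 / 4))))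
    (hdu2 : Integrable (fun y : EuclideanSpace ℝ (Fin d) =>
      ‖fderiv ℝ u y‖ ^ 2 * (((4 * π) ^ ((d : ℝ) / 2))⁻¹ * Real.exp (-‖y‖ ^ 2 / 4)))) :
    (∫ y : EuclideanSpace ℝ (Fin d),
        u y ^ 2 * ‖y‖ ^ 2 * (((4 * π) ^ ((d : ℝ) / 2))⁻¹ * Real.exp (-‖y‖ ^ 2 / 4))) ≤
      4 * ∫ y : EuclideanSpace ℝ (Fin d),
        ((d : ℝ) * u y ^ 2 + 4 * ‖fderiv ℝ u y‖ ^ 2) *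
          (((4 * π) ^ ((d : ℝ) / 2))⁻¹ * Real.exp (-‖y‖ ^ 2 / 4)) := by
  have hπ : (0:ℝ) < 4 * π := by positivity
  have hcpos : 0 < (((4 * π : ℝ)) ^ ((d : ℝ) / 2))⁻¹ := by positivity
  have hRHSnn : 0 ≤ ∫ y : EuclideanSpace ℝ (Fin d),
      ((d : ℝ) * u y ^ 2 + 4 * ‖fderiv ℝ u y‖ ^ 2) *
        (((4 * π) ^ ((d : ℝ) / 2))⁻¹ * Real.exp (-‖y‖ ^ 2 / 4)) := by
    refine integral_nonneg fun y => ?_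
    have h1 : (0:ℝ) ≤ (d : ℝ) := Nat.cast_nonneg d
    positivity
  by_cases hI : Integrable (fun y : EuclideanSpace ℝ (Fin d) =>
      u y ^ 2 * ‖y‖ ^ 2 * (((4 * π) ^ ((d : ℝ) / 2))⁻¹ * Real.exp (-‖y‖ ^ 2 / 4)))
  swap
  · rw [integral_undef hI]; linarith
  rcases d with _ | n
  · have h0 : ∀ y : EuclideanSpace ℝ (Fin 0),
        u y ^ 2 * ‖y‖ ^ 2 * (((4 * π) ^ (((0:ℕ) : ℝ) / 2))⁻¹ * Real.exp (-‖y‖ ^ 2 / 4)) = 0 := by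
      intro y
      have hy : ‖y‖ = 0 := by
        rw [show y = 0 from Subsingleton.elim y 0, norm_zero]
      rw [hy]; ring
    rw [integral_congr_ae (Filter.Eventually.of_forall h0), integral_zero]
    linarith
  -- d = n + 1
  set c : ℝ := ((4 * π) ^ (((n+1 : ℕ) : ℝ) / 2))⁻¹ with hc
  set L := (EuclideanSpace.equiv (Fin (n+1)) ℝ).symm with hL
  set e2 := (MeasurableEquiv.toLp 2 (Fin (n+1) → ℝ)).symm with he2
  have mp : MeasurePreserving (⇑e2.symm) volume volume :=
    (EuclideanSpace.volume_preserving_symm_measurableEquiv_toLp (Fin (n+1))).symm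
  have hnorm : ∀ y : EuclideanSpace ℝ (Fin (n+1)), ‖y‖ ^ 2 = ∑ j, y j ^ 2 := by
    intro y
    rw [EuclideanSpace.norm_eq, Real.sq_sqrt (Finset.sum_nonneg fun j _ => sq_nonneg _)]
    exact Finset.sum_congr rfl fun j _ => by rw [Real.norm_eq_abs, sq_abs]
  set v : (Fin (n+1) → ℝ) → ℝ := fun x => u (L x) with hv_def
  set N : (Fin (n+1) → ℝ) → ℝ := fun x => ‖fderiv ℝ u (L x)‖ with hN_def
  have hv : Differentiable ℝ v := hu.comp L.differentiable
  have hfd : ∀ x, fderiv ℝ v x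
      = (fderiv ℝ u (L x)).comp (L : (Fin (n+1) → ℝ) →L[ℝ] EuclideanSpace ℝ (Fin (n+1))) :=
    fun x => ((hu (L x)).hasFDerivAt.comp x L.hasFDerivAt).fderiv
  have hLapp : ∀ (x : Fin (n+1) → ℝ) (j : Fin (n+1)),
      (L x : EuclideanSpace ℝ (Fin (n+1))) j = x j := fun x j => rfl
  have hLnorm : ∀ x : Fin (n+1) → ℝ,
      ‖(L x : EuclideanSpace ℝ (Fin (n+1)))‖ = Real.sqrt (∑ j, x j ^ 2) := by
    intro x
    rw [EuclideanSpace.norm_eq]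
    congr 1
    exact Finset.sum_congr rfl fun j _ => by rw [hLapp, Real.norm_eq_abs, sq_abs]
  have hN1 : ∀ (x : Fin (n+1) → ℝ) (i : Fin (n+1)),
      |fderiv ℝ v x (Pi.single i 1)| ≤ N x := by
    intro x i
    rw [hfd, ContinuousLinearMap.comp_apply, ← Real.norm_eq_abs]
    have h1 := (fderiv ℝ u (L x)).le_opNorm (L (Pi.single i 1))
    have h2 : ‖(L (Pi.single i 1) : EuclideanSpace ℝ (Fin (n+1)))‖ = 1 := by
      rw [hLnorm]
      have : (∑ j, (Pi.single i 1 : Fin (n+1) → ℝ) j ^ 2) = 1 := by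
        simp [Pi.single_apply, apply_ite (fun r : ℝ => r ^ 2)]
      rw [this, Real.sqrt_one]
    calc ‖(fderiv ℝ u (L x)) (L (Pi.single i 1))‖
        ≤ ‖fderiv ℝ u (L x)‖ * ‖(L (Pi.single i 1) : EuclideanSpace ℝ (Fin (n+1)))‖ := h1
      _ = N x := by rw [h2, mul_one]
  have hN2 : ∀ x : Fin (n+1) → ℝ,
      |fderiv ℝ v x x| ≤ N x * Real.sqrt (∑ j, x j ^ 2) := by
    intro x
    rw [hfd, ContinuousLinearMap.comp_apply, ← Real.norm_eq_abs]
    have h1 := (fderiv ℝ u (L x)).le_opNorm (L x)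
    calc ‖(fderiv ℝ u (L x)) (L x)‖
        ≤ ‖fderiv ℝ u (L x)‖ * ‖(L x : EuclideanSpace ℝ (Fin (n+1)))‖ := h1
      _ = N x * Real.sqrt (∑ j, x j ^ 2) := by rw [hLnorm]
  -- transported integrability
  have hApi : Integrable (fun x : Fin (n+1) → ℝ =>
      v x ^ 2 * (c * Real.exp (-(∑ j, x j ^ 2) / 4))) := by
    refine ((mp.integrable_comp_emb e2.symm.measurableEmbedding).mpr hu2).congr
      (Filter.Eventually.of_forall fun x => ?_)
    show u (e2.symm x) ^ 2 * (c * Real.exp (-‖e2.symm x‖ ^ 2 / 4)) = _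
    rw [hnorm (e2.symm x)]
    rfl
  have hBpi : Integrable (fun x : Fin (n+1) → ℝ =>
      N x ^ 2 * (c * Real.exp (-(∑ j, x j ^ 2) / 4))) := by
    refine ((mp.integrable_comp_emb e2.symm.measurableEmbedding).mpr hdu2).congr
      (Filter.Eventually.of_forall fun x => ?_)
    show ‖fderiv ℝ u (e2.symm x)‖ ^ 2 * (c * Real.exp (-‖e2.symm x‖ ^ 2 / 4)) = _
    rw [hnorm (e2.symm x)]
    rfl
  have hIpi : Integrable (fun x : Fin (n+1) → ℝ =>
      v x ^ 2 * (∑ j, x j ^ 2) * (c * Real.exp (-(∑ j, x j ^ 2) / 4))) := by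
    refine ((mp.integrable_comp_emb e2.symm.measurableEmbedding).mpr hI).congr
      (Filter.Eventually.of_forall fun x => ?_)
    show u (e2.symm x) ^ 2 * ‖e2.symm x‖ ^ 2 * (c * Real.exp (-‖e2.symm x‖ ^ 2 / 4)) = _
    rw [hnorm (e2.symm x)]
    rfl
  -- transported integrals
  have hTL : (∫ y : EuclideanSpace ℝ (Fin (n+1)),
        u y ^ 2 * ‖y‖ ^ 2 * (c * Real.exp (-‖y‖ ^ 2 / 4)))
      = ∫ x : Fin (n+1) → ℝ, v x ^ 2 * (∑ j, x j ^ 2) * (c * Real.exp (-(∑ j, x j ^ 2) / 4)) := by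
    rw [← mp.integral_comp' (fun y => u y ^ 2 * ‖y‖ ^ 2 * (c * Real.exp (-‖y‖ ^ 2 / 4)))]
    refine integral_congr_ae (Filter.Eventually.of_forall fun x => ?_)
    show u (e2.symm x) ^ 2 * ‖e2.symm x‖ ^ 2 * (c * Real.exp (-‖e2.symm x‖ ^ 2 / 4)) = _
    rw [hnorm (e2.symm x)]
    rfl
  have hTR : (∫ y : EuclideanSpace ℝ (Fin (n+1)),
        (((n+1 : ℕ) : ℝ) * u y ^ 2 + 4 * ‖fderiv ℝ u y‖ ^ 2) * (c * Real.exp (-‖y‖ ^ 2 / 4)))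
      = ∫ x : Fin (n+1) → ℝ,
          (((n+1 : ℕ) : ℝ) * v x ^ 2 + 4 * N x ^ 2) * (c * Real.exp (-(∑ j, x j ^ 2) / 4)) := by
    rw [← mp.integral_comp' (fun y =>
      (((n+1 : ℕ) : ℝ) * u y ^ 2 + 4 * ‖fderiv ℝ u y‖ ^ 2) * (c * Real.exp (-‖y‖ ^ 2 / 4)))]
    refine integral_congr_ae (Filter.Eventually.of_forall fun x => ?_)
    show (((n+1 : ℕ) : ℝ) * u (e2.symm x) ^ 2 + 4 * ‖fderiv ℝ u (e2.symm x)‖ ^ 2)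
        * (c * Real.exp (-‖e2.symm x‖ ^ 2 / 4)) = _
    rw [hnorm (e2.symm x)]
    rfl
  rw [hTL, hTR]
  have hkey := pi_key v N hv hcpos hN1 hN2 hApi hBpi hIpi
  have hRW : (∫ x : Fin (n+1) → ℝ,
        (((n+1 : ℕ) : ℝ) * v x ^ 2 + 4 * N x ^ 2) * (c * Real.exp (-(∑ j, x j ^ 2) / 4)))
      = ((n : ℝ) + 1) * (∫ x : Fin (n+1) → ℝ, v x ^ 2 * (c * Real.exp (-(∑ j, x j ^ 2) / 4)))
        + 4 * ∫ x : Fin (n+1) → ℝ, N x ^ 2 * (c * Real.exp (-(∑ j, x j ^ 2) / 4)) := by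
    rw [← int_lin2 hApi hBpi ((n : ℝ) + 1) 4]
    refine integral_congr_ae (Filter.Eventually.of_forall fun x => ?_)
    push_cast
    ring
  rw [hRW]
  linarith
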